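/- Let d ≥ 3 be an integer, set ε₀ = √(d−1) and α = (d² + 2dε₀ + 2ε₀²)/(d + 2ε₀), and define f(x) = (α − x)(x + ε₀)²(x + d). Then f(ε₀) = f(d), α > d, f(x) ≥ 0 for all x ∈ [−d, d], and f(x) > f(d) for all x ∈ (ε₀, d). -/
import Mathlib

/-- Let `d ≥ 3` be an integer, set `ε₀ = √(d−1)` and
`α = (d² + 2dε₀ + 2ε₀²)/(d + 2ε₀)`, and define `f x = (α − x)(x + ε₀)²(x + d)`.
Then `f ε₀ = f d`, `α > d`, `f x ≥ 0` for all `x ∈ [−d, d]`, and `f x > f d` for all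
`x ∈ (ε₀, d)`. -/
theorem magic_polynomial_properties
    (d : ℕ) (hd : 3 ≤ d)
    (ε₀ α : ℝ) (hε₀ : ε₀ = Real.sqrt ((d : ℝ) - 1))
    (hα : α = ((d : ℝ) ^ 2 + 2 * (d : ℝ) * ε₀ + 2 * ε₀ ^ 2) / ((d : ℝ) + 2 * ε₀))
    (f : ℝ → ℝ) (hf : ∀ x : ℝ, f x = (α - x) * (x + ε₀) ^ 2 * (x + (d : ℝ))) :
    f ε₀ = f (d : ℝ) ∧
      (d : ℝ) < α ∧
      (∀ x ∈ Set.Icc (-(d : ℝ)) (d : ℝ), 0 ≤ f x) ∧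
      (∀ x ∈ Set.Ioo ε₀ (d : ℝ), f (d : ℝ) < f x) := by
  have hD : (3 : ℝ) ≤ (d : ℝ) := by exact_mod_cast hd
  have h1 : (0 : ℝ) < (d : ℝ) - 1 := by linarith
  have he : ε₀ ^ 2 = (d : ℝ) - 1 := by
    rw [hε₀, Real.sq_sqrt h1.le]
  have he0 : 0 < ε₀ := by
    rw [hε₀]; exact Real.sqrt_pos.mpr h1
  have heD : ε₀ < (d : ℝ) := by
    nlinarith [sq_nonneg (ε₀ - (d : ℝ))]
  have hA : (0 : ℝ) < (d : ℝ) + 2 * ε₀ := by linarith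
  have hαd : (d : ℝ) < α := by
    rw [hα]
    rw [lt_div_iff₀ hA]
    nlinarith
  refine ⟨?_, hαd, ?_, ?_⟩
  · rw [hf, hf, hα]
    field_simp
    ring
  · intro x hx
    obtain ⟨hx1, hx2⟩ := hx
    rw [hf]
    have h2 : 0 ≤ α - x := by linarith
    have h3 : 0 ≤ x + (d : ℝ) := by linarith
    positivity
  · intro x hx
    obtain ⟨hx1, hx2⟩ := hx
    have key : f x - f (d : ℝ) =
        (x - ε₀) * ((d : ℝ) - x) *
          (((d : ℝ) + 2 * ε₀) * x ^ 2 + ((d : ℝ) + ε₀) * ((d : ℝ) + 4 * ε₀) * x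
            + ε₀ * (3 * (d : ℝ) ^ 2 + 6 * (d : ℝ) * ε₀ + 2 * ε₀ ^ 2)) /
          ((d : ℝ) + 2 * ε₀) := by
      rw [hf, hf, hα]
      field_simp
      ring
    have hx0 : 0 < x := lt_trans he0 hx1
    have hQ : 0 < ((d : ℝ) + 2 * ε₀) * x ^ 2 + ((d : ℝ) + ε₀) * ((d : ℝ) + 4 * ε₀) * x
        + ε₀ * (3 * (d : ℝ) ^ 2 + 6 * (d : ℝ) * ε₀ + 2 * ε₀ ^ 2) := by positivity
    have hpos : 0 < (x - ε₀) * ((d : ℝ) - x) *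
          (((d : ℝ) + 2 * ε₀) * x ^ 2 + ((d : ℝ) + ε₀) * ((d : ℝ) + 4 * ε₀) * x
            + ε₀ * (3 * (d : ℝ) ^ 2 + 6 * (d : ℝ) * ε₀ + 2 * ε₀ ^ 2)) /
          ((d : ℝ) + 2 * ε₀) := by
      apply div_pos _ hA
      apply mul_pos (mul_pos (by linarith) (by linarith)) hQ
    linarith [key ▸ hpos]
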